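/- Let m, n be positive integers and let φ : M_{mn}(ℂ) → M_{mn}(ℂ) be a linear skew RT-symmetric map, i.e. tr(φ(A)·B) = −tr(φ(B)·A) for all A, B ∈ M_{mn}(ℂ). Then det(exp(φ(A ⊕ B))) = det(exp(A ⊕ B)) for all A ∈ M_m(ℂ) and B ∈ M_n(ℂ) if and only if tr₁(φ(I_{mn})) = −m·I_n and tr₂(φ(I_{mn})) = −n·I_m. -/

import Mathlib

open Matrix Kronecker BigOperators

/-- The Kronecker sum `A ⊕ B = A ⊗ Iₙ + Iₘ ⊗ B`. -/
def kronSum {F : Type*} [CommRing F] {m n : ℕ}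
    (A : Matrix (Fin m) (Fin m) F) (B : Matrix (Fin n) (Fin n) F) :
    Matrix (Fin m × Fin n) (Fin m × Fin n) F :=
  A ⊗ₖ (1 : Matrix (Fin n) (Fin n) F) + (1 : Matrix (Fin m) (Fin m) F) ⊗ₖ B

/-- The first partial trace `tr₁(P) = Σⱼ Pⱼⱼ` (sum of the diagonal blocks). -/
def ptrace1 {F : Type*} [AddCommMonoid F] {m n : ℕ}
    (P : Matrix (Fin m × Fin n) (Fin m × Fin n) F) :
    Matrix (Fin n) (Fin n) F :=
  Matrix.of fun a b => ∑ k : Fin m, P (k, a) (k, b)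

/-- The second partial trace `tr₂(P) = Σ_{k,l} tr(P_{kl}) E_{kl}` (blockwise trace). -/
def ptrace2 {F : Type*} [AddCommMonoid F] {m n : ℕ}
    (P : Matrix (Fin m × Fin n) (Fin m × Fin n) F) :
    Matrix (Fin m) (Fin m) F :=
  Matrix.of fun k l => ∑ a : Fin n, P (k, a) (l, a)

section DetExp

open NormedSpace Equiv

/-- `det (exp A) = exp (trace A)` for complex matrices. -/
theorem my_det_exp {N : Type*} [Fintype N] [DecidableEq N] (A : Matrix N N ℂ) :
    (exp A).det = Complex.exp A.trace := by
  letI : NormedRing (Matrix N N ℂ) := Matrix.linftyOpNormedRing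
  letI : NormedAlgebra ℝ (Matrix N N ℂ) := Matrix.linftyOpNormedAlgebra
  set E : ℝ → Matrix N N ℂ := fun t => exp (t • A) with hE
  set f : ℝ → ℂ := fun t => (E t).det with hf
  have entryD : ∀ (t : ℝ) (i j : N), HasDerivAt (fun s => E s i j) ((E t * A) i j) t := by
    intro t i j
    have h := hasDerivAt_exp_smul_const (𝕂 := ℝ) A t
    exact ((Matrix.entryLinearMap ℝ ℂ i j).toContinuousLinearMap.hasFDerivAt.comp_hasDerivAt t h)
  have hE0 : E 0 = 1 := by simp [hE, exp_zero]
  have hf00 : f 0 = 1 := by simp [hf, hE0]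
  have hf0 : HasDerivAt f A.trace 0 := by
    have key : HasDerivAt f
        (∑ σ : Perm N, (Equiv.Perm.sign σ : ℂ) *
          (∑ i, (∏ j ∈ Finset.univ.erase i, E 0 (σ j) j) • ((E 0 * A) (σ i) i))) 0 := by
      have : f = fun t => ∑ σ : Perm N, (Equiv.Perm.sign σ : ℂ) * ∏ i, E t (σ i) i := by
        funext t; simp [hf, Matrix.det_apply']
      rw [this]
      exact HasDerivAt.fun_sum fun σ _ =>
        ((HasDerivAt.fun_finsetProd (fun i _ => entryD 0 (σ i) i))).const_mul _
    convert key using 1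
    rw [hE0, one_mul]
    rw [Finset.sum_eq_single (1 : Perm N)]
    · simp [Matrix.trace, Matrix.one_apply, smul_eq_mul]
    · intro σ _ hσ
      have : ∀ i : N, (∏ j ∈ Finset.univ.erase i, (1 : Matrix N N ℂ) (σ j) j) = 0 := by
        intro i
        obtain ⟨a, ha⟩ : ∃ a, σ a ≠ a := by
          by_contra h
          push_neg at h
          exact hσ (Equiv.ext h)
        rcases eq_or_ne a i with rfl | hai
        · refine Finset.prod_eq_zero (i := σ a) ?_ ?_
          · simp [Finset.mem_erase, ha]
          · exact Matrix.one_apply_ne (fun h => ha (σ.injective h))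
        · refine Finset.prod_eq_zero (i := a) ?_ ?_
          · simp [Finset.mem_erase, hai]
          · exact Matrix.one_apply_ne ha
      simp [this]
    · simp
  have hmul : ∀ s t : ℝ, f (s + t) = f s * f t := by
    intro s t
    have hc : Commute (s • A) (t • A) := ((Commute.refl A).smul_left s).smul_right t
    simp only [hf, hE, add_smul]
    rw [Matrix.exp_add_of_commute _ _ hc, det_mul]
  have hft : ∀ t : ℝ, HasDerivAt f (f t * A.trace) t := by
    intro t
    have h0 : HasDerivAt f A.trace (t - t) := by simpa using hf0
    have h1 : HasDerivAt (fun u : ℝ => f (u - t)) A.trace t :=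
      HasDerivAt.comp_sub_const t t h0
    have h2 := h1.const_mul (f t)
    have heq : (fun u : ℝ => f t * f (u - t)) = f := by
      funext u
      rw [← hmul t (u - t)]
      ring_nf
    rw [heq] at h2
    simpa [mul_comm] using h2
  set F : ℝ → ℂ := fun t => f t * Complex.exp (-A.trace * t) with hF
  have hFd : ∀ t : ℝ, HasDerivAt F 0 t := by
    intro t
    have hexp : HasDerivAt (fun y : ℝ => Complex.exp (-A.trace * y))
        (-A.trace * Complex.exp (-A.trace * t)) t := by
      have hC : HasDerivAt (fun z : ℂ => Complex.exp (-A.trace * z))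
          (-A.trace * Complex.exp (-A.trace * (t : ℂ))) (t : ℂ) := by
        have h := (Complex.hasDerivAt_exp (-A.trace * (t : ℂ))).comp (t : ℂ)
          ((hasDerivAt_id (t : ℂ)).const_mul (-A.trace))
        exact h.congr_deriv (by ring)
      exact hC.comp_ofReal
    have := (hft t).mul hexp
    exact this.congr_deriv (by ring)
  have hconst := is_const_of_deriv_eq_zero (f := F)
    (fun t => (hFd t).differentiableAt) (fun t => (hFd t).deriv) 1 0
  have hF0 : F 0 = 1 := by simp [hF, hf00]
  have hF1 : F 1 = (exp A).det * Complex.exp (-A.trace) := by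
    simp only [hF, hf, hE, one_smul, Complex.ofReal_one, mul_one]
  rw [hF1, hF0] at hconst
  have := Complex.exp_ne_zero (-A.trace)
  field_simp [Complex.exp_neg] at hconst
  have h2 := congrArg (· * Complex.exp A.trace) hconst
  simp only [mul_assoc, ← Complex.exp_add, neg_add_cancel, Complex.exp_zero, mul_one, one_mul] at h2
  exact h2

end DetExp

section TraceLemmas

variable {m n : ℕ}

theorem trace_mul_kron_one (P : Matrix (Fin m × Fin n) (Fin m × Fin n) ℂ)
    (A : Matrix (Fin m) (Fin m) ℂ) :
    (P * (A ⊗ₖ (1 : Matrix (Fin n) (Fin n) ℂ))).trace = (ptrace2 P * A).trace := by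
  simp only [Matrix.trace, Matrix.diag, Matrix.mul_apply, ptrace2, Matrix.kroneckerMap_apply,
    Matrix.of_apply, Matrix.one_apply, mul_ite, mul_one, mul_zero, Finset.sum_mul,
    Fintype.sum_prod_type]
  simp only [Finset.sum_ite_eq', Finset.mem_univ, if_true]
  exact Finset.sum_congr rfl fun k _ => Finset.sum_comm

theorem trace_mul_one_kron (P : Matrix (Fin m × Fin n) (Fin m × Fin n) ℂ)
    (B : Matrix (Fin n) (Fin n) ℂ) :
    (P * ((1 : Matrix (Fin m) (Fin m) ℂ) ⊗ₖ B)).trace = (ptrace1 P * B).trace := by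
  simp only [Matrix.trace, Matrix.diag, Matrix.mul_apply, ptrace1, Matrix.kroneckerMap_apply,
    Matrix.of_apply, Matrix.one_apply, ite_mul, one_mul, zero_mul, Finset.sum_mul,
    Fintype.sum_prod_type]
  simp only [mul_ite, mul_zero]
  conv_lhs => enter [2, x, 2, x1]; rw [Finset.sum_comm]
  simp only [Finset.sum_ite_eq', Finset.mem_univ, if_true]
  rw [Finset.sum_comm]
  exact Finset.sum_congr rfl fun a _ => Finset.sum_comm

theorem trace_eq_zero_forall {k : ℕ} (M : Matrix (Fin k) (Fin k) ℂ)
    (h : ∀ A, (M * A).trace = 0) : M = 0 := by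
  ext i j
  have := h (Matrix.single j i 1)
  simpa [Matrix.trace, Matrix.diag, Matrix.mul_apply, Matrix.single, ite_and,
    Finset.sum_ite_eq, eq_comm] using this

theorem trace_kronSum (A : Matrix (Fin m) (Fin m) ℂ) (B : Matrix (Fin n) (Fin n) ℂ) :
    (kronSum A B).trace = (n : ℂ) * A.trace + (m : ℂ) * B.trace := by
  simp [kronSum, Matrix.trace_kronecker, Matrix.trace_one, mul_comm]

theorem kronSum_smul (t : ℂ) (A : Matrix (Fin m) (Fin m) ℂ) (B : Matrix (Fin n) (Fin n) ℂ) :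
    kronSum (t • A) (t • B) = t • kronSum A B := by
  simp [kronSum, Matrix.smul_kronecker, Matrix.kronecker_smul, smul_add]

theorem exp_scalar_inj {x y : ℂ} (h : ∀ t : ℂ, Complex.exp (t * x) = Complex.exp (t * y)) :
    x = y := by
  by_contra hxy
  have hc : x - y ≠ 0 := sub_ne_zero.mpr hxy
  set t : ℂ := (Real.pi : ℂ) * Complex.I / (x - y) with ht
  have h1 : Complex.exp (t * x - t * y) = 1 := by
    rw [Complex.exp_sub, h t, div_self (Complex.exp_ne_zero _)]
  have h2 : t * x - t * y = (Real.pi : ℂ) * Complex.I := by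
    rw [← mul_sub, ht, div_mul_cancel₀ _ hc]
  rw [h2, Complex.exp_pi_mul_I] at h1
  norm_num at h1

end TraceLemmas

/-- Theorem 4.3: a skew RT-symmetric linear map `φ` on `M_{mn}(ℂ)` (i.e.
`tr(φ(A)B) = −tr(φ(B)A)` for all `A, B`) preserves the determinant of `exp` of all
Kronecker sums iff `tr₁(φ(I)) = −m·Iₙ` and `tr₂(φ(I)) = −n·Iₘ`. -/
theorem det_exp_kronSum_preserved_iff_of_skew_rt_symmetric
    {m n : ℕ} (hm : 0 < m) (hn : 0 < n)
    (φ : Matrix (Fin m × Fin n) (Fin m × Fin n) ℂ →ₗ[ℂ]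
         Matrix (Fin m × Fin n) (Fin m × Fin n) ℂ)
    (hskew : ∀ A B : Matrix (Fin m × Fin n) (Fin m × Fin n) ℂ,
        (φ A * B).trace = -((φ B * A).trace)) :
    (∀ (A : Matrix (Fin m) (Fin m) ℂ) (B : Matrix (Fin n) (Fin n) ℂ),
        (NormedSpace.exp (φ (kronSum A B))).det = (NormedSpace.exp (kronSum A B)).det) ↔
      (ptrace1 (φ 1) = -((m : ℂ) • (1 : Matrix (Fin n) (Fin n) ℂ)) ∧
       ptrace2 (φ 1) = -((n : ℂ) • (1 : Matrix (Fin m) (Fin m) ℂ))) := by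
  -- trace of φ X in terms of φ 1
  have htrphi : ∀ X, (φ X).trace = -((φ 1 * X).trace) := by
    intro X
    have := hskew X 1
    simpa using this
  -- trace of φ on Kronecker sums
  have hphiK : ∀ (A : Matrix (Fin m) (Fin m) ℂ) (B : Matrix (Fin n) (Fin n) ℂ),
      (φ (kronSum A B)).trace =
        -((ptrace2 (φ 1) * A).trace + (ptrace1 (φ 1) * B).trace) := by
    intro A B
    rw [htrphi, kronSum, mul_add, Matrix.trace_add,
      trace_mul_kron_one, trace_mul_one_kron]
  constructor
  · -- forward
    intro hdet
    have htr : ∀ (A : Matrix (Fin m) (Fin m) ℂ) (B : Matrix (Fin n) (Fin n) ℂ),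
        (φ (kronSum A B)).trace = (kronSum A B).trace := by
      intro A B
      apply exp_scalar_inj
      intro t
      have := hdet (t • A) (t • B)
      rw [my_det_exp, my_det_exp, kronSum_smul, LinearMap.map_smul, Matrix.trace_smul,
        Matrix.trace_smul, smul_eq_mul, smul_eq_mul] at this
      exact this
    have hAB : ∀ (A : Matrix (Fin m) (Fin m) ℂ) (B : Matrix (Fin n) (Fin n) ℂ),
        (ptrace2 (φ 1) * A).trace + (ptrace1 (φ 1) * B).trace
          = -((n : ℂ) * A.trace + (m : ℂ) * B.trace) := by
      intro A B
      have h := htr A B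
      rw [hphiK, trace_kronSum] at h
      linear_combination -h
    constructor
    · have key : ∀ B : Matrix (Fin n) (Fin n) ℂ,
          ((ptrace1 (φ 1) + (m : ℂ) • 1) * B).trace = 0 := by
        intro B
        have h := hAB 0 B
        simp only [Matrix.mul_zero, Matrix.trace_zero, zero_add, mul_zero] at h
        rw [Matrix.add_mul, Matrix.trace_add, Matrix.smul_mul, Matrix.one_mul,
          Matrix.trace_smul, h, smul_eq_mul]
        ring
      have h0 := trace_eq_zero_forall _ key
      rw [add_eq_zero_iff_eq_neg] at h0
      exact h0
    · have key : ∀ A : Matrix (Fin m) (Fin m) ℂ,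
          ((ptrace2 (φ 1) + (n : ℂ) • 1) * A).trace = 0 := by
        intro A
        have h := hAB A 0
        simp only [Matrix.mul_zero, Matrix.trace_zero, add_zero, mul_zero] at h
        rw [Matrix.add_mul, Matrix.trace_add, Matrix.smul_mul, Matrix.one_mul,
          Matrix.trace_smul, h, smul_eq_mul]
        ring
      have h0 := trace_eq_zero_forall _ key
      rw [add_eq_zero_iff_eq_neg] at h0
      exact h0
  · -- backward
    rintro ⟨h1, h2⟩ A B
    rw [my_det_exp, my_det_exp]
    congr 1
    rw [hphiK, h1, h2, trace_kronSum]
    simp [Matrix.smul_mul, Matrix.trace_smul]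
    ring
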